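/- For every f : ℕ → ℕ, all k, n, ℓ ∈ ℕ, one has binom(k,n)_f = ∑_{i=0}^{k} f(ℓ)^i · C(k,i) · binom(k−i, n−ℓ·i)_g, where C(k,i) is the ordinary binomial coefficient, g : ℕ → ℕ is defined by g(s) = f(s) for s ≠ ℓ and g(ℓ) = 0, and terms with ℓ·i > n are zero. -/

import Mathlib

/-- The extended binomial coefficient `binom(k,n)_f`: the sum, over all
`k`-tuples `(π₁,…,π_k)` of nonnegative integers with `π₁ + ⋯ + π_k = n`,
of the products `f(π₁)⋯f(π_k)`. It counts the `f`-weighted integer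
compositions of `n` with exactly `k` parts. -/
def extBinom (f : ℕ → ℕ) (k n : ℕ) : ℕ :=
  ∑ π ∈ Finset.Nat.antidiagonalTuple k n, ∏ i, f (π i)

lemma extBinom_zero (f : ℕ → ℕ) (n : ℕ) : extBinom f 0 n = if n = 0 then 1 else 0 := by
  cases n <;> simp [extBinom]

lemma extBinom_succ (f : ℕ → ℕ) (k n : ℕ) :
    extBinom f (k+1) n = ∑ ab ∈ Finset.HasAntidiagonal.antidiagonal n, f ab.1 * extBinom f k ab.2 := by
  unfold extBinom
  simp_rw [Finset.mul_sum]
  rw [eq_comm, ← Finset.sum_sigma (Finset.HasAntidiagonal.antidiagonal n)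
    (fun ab => Finset.Nat.antidiagonalTuple k ab.2) (fun x => f x.1.1 * ∏ i, f (x.2 i)), eq_comm]
  refine Finset.sum_nbij'
    (fun (x : Fin (k+1) → ℕ) =>
      (⟨(x 0, ∑ i : Fin k, x i.succ), Fin.tail x⟩ : (_ : ℕ × ℕ) × (Fin k → ℕ)))
    (fun x => Fin.cons x.1.1 x.2) ?_ ?_ ?_ ?_ ?_
  · intro a ha
    rw [Finset.Nat.mem_antidiagonalTuple, Fin.sum_univ_succ] at ha
    simp only [Finset.mem_sigma, Finset.HasAntidiagonal.mem_antidiagonal, Finset.Nat.mem_antidiagonalTuple]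
    exact ⟨ha, rfl⟩
  · intro a ha
    simp only [Finset.mem_sigma, Finset.HasAntidiagonal.mem_antidiagonal,
      Finset.Nat.mem_antidiagonalTuple] at ha
    rw [Finset.Nat.mem_antidiagonalTuple, Fin.sum_univ_succ]
    simp [ha.2, ha.1]
  · intro a _; exact Fin.cons_self_tail a
  · intro a ha
    simp only [Finset.mem_sigma, Finset.HasAntidiagonal.mem_antidiagonal,
      Finset.Nat.mem_antidiagonalTuple] at ha
    refine Sigma.ext ?_ ?_
    · simp only [Fin.cons_succ, Fin.cons_zero, ha.2]
    · simp [Fin.tail_cons]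
  · intro a _
    rw [Fin.prod_univ_succ]
    rfl

lemma sum_antidiagonal_shift (h : ℕ → ℕ → ℕ) (n d : ℕ) (hd : d ≤ n) :
    ∑ ab ∈ Finset.HasAntidiagonal.antidiagonal n, (if d ≤ ab.2 then h ab.1 (ab.2 - d) else 0)
      = ∑ ab ∈ Finset.HasAntidiagonal.antidiagonal (n - d), h ab.1 ab.2 := by
  rw [← Finset.sum_filter]
  refine Finset.sum_nbij' (fun ab => (ab.1, ab.2 - d)) (fun ab => (ab.1, ab.2 + d)) ?_ ?_ ?_ ?_ ?_
  · intro a ha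
    simp only [Finset.mem_filter, Finset.HasAntidiagonal.mem_antidiagonal] at ha ⊢
    omega
  · intro a ha
    simp only [Finset.mem_filter, Finset.HasAntidiagonal.mem_antidiagonal] at ha ⊢
    omega
  · intro a ha
    simp only [Finset.mem_filter, Finset.HasAntidiagonal.mem_antidiagonal] at ha
    ext <;> simp <;> omega
  · intro a ha; ext <;> simp
  · intro a _; rfl

theorem extBinom_remove_part_size (f : ℕ → ℕ) (k n ℓ : ℕ) :
    extBinom f k n =
      ∑ i ∈ Finset.range (k + 1),
        if ℓ * i ≤ n then
          f ℓ ^ i * k.choose i * extBinom (Function.update f ℓ 0) (k - i) (n - ℓ * i)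
        else 0 := by
  set g := Function.update f ℓ 0 with hg
  induction k generalizing n with
  | zero => simp [extBinom_zero]
  | succ k ih =>
    have hfa : ∀ a, f a = g a + (if a = ℓ then f ℓ else 0) := by
      intro a
      by_cases h : a = ℓ <;> simp [hg, Function.update_apply, h]
    -- the second summand
    have hS2 : ∑ ab ∈ Finset.HasAntidiagonal.antidiagonal n, (if ab.1 = ℓ then f ℓ else 0) * extBinom f k ab.2
        = if ℓ ≤ n then f ℓ * extBinom f k (n - ℓ) else 0 := by
      rw [Finset.Nat.sum_antidiagonal_eq_sum_range_succ
        (fun a b => (if a = ℓ then f ℓ else 0) * extBinom f k b)]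
      simp_rw [ite_mul, zero_mul]
      rw [Finset.sum_ite_eq' (Finset.range (n + 1)) ℓ (fun a => f ℓ * extBinom f k (n - a))]
      simp [Nat.lt_succ_iff]
    -- the first summand
    have hS1 : ∑ ab ∈ Finset.HasAntidiagonal.antidiagonal n, g ab.1 * extBinom f k ab.2
        = ∑ i ∈ Finset.range (k + 1), if ℓ * i ≤ n then
            f ℓ ^ i * k.choose i * extBinom g (k + 1 - i) (n - ℓ * i) else 0 := by
      calc ∑ ab ∈ Finset.HasAntidiagonal.antidiagonal n, g ab.1 * extBinom f k ab.2
          = ∑ ab ∈ Finset.HasAntidiagonal.antidiagonal n, ∑ i ∈ Finset.range (k + 1),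
              (if ℓ * i ≤ ab.2 then
                g ab.1 * (f ℓ ^ i * k.choose i * extBinom g (k - i) (ab.2 - ℓ * i)) else 0) := by
            refine Finset.sum_congr rfl fun ab _ => ?_
            rw [ih ab.2, Finset.mul_sum]
            exact Finset.sum_congr rfl fun i _ => by rw [mul_ite, mul_zero]
        _ = ∑ i ∈ Finset.range (k + 1), ∑ ab ∈ Finset.HasAntidiagonal.antidiagonal n,
              (if ℓ * i ≤ ab.2 then
                g ab.1 * (f ℓ ^ i * k.choose i * extBinom g (k - i) (ab.2 - ℓ * i)) else 0) :=
            Finset.sum_comm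
        _ = ∑ i ∈ Finset.range (k + 1), if ℓ * i ≤ n then
              f ℓ ^ i * k.choose i * extBinom g (k + 1 - i) (n - ℓ * i) else 0 := by
            refine Finset.sum_congr rfl fun i hi => ?_
            rw [Finset.mem_range] at hi
            by_cases hli : ℓ * i ≤ n
            · rw [if_pos hli]
              refine Eq.trans (sum_antidiagonal_shift
                (fun a b => g a * (f ℓ ^ i * k.choose i * extBinom g (k - i) b)) n (ℓ * i) hli) ?_
              rw [show k + 1 - i = (k - i) + 1 by omega, extBinom_succ, Finset.mul_sum]
              exact Finset.sum_congr rfl fun ab _ => by ring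
            · rw [if_neg hli]
              refine Finset.sum_eq_zero fun ab hab => ?_
              rw [Finset.HasAntidiagonal.mem_antidiagonal] at hab
              rw [if_neg (by omega)]
    rw [extBinom_succ]
    have split : ∑ ab ∈ Finset.HasAntidiagonal.antidiagonal n, f ab.1 * extBinom f k ab.2
        = (∑ ab ∈ Finset.HasAntidiagonal.antidiagonal n, g ab.1 * extBinom f k ab.2)
          + ∑ ab ∈ Finset.HasAntidiagonal.antidiagonal n, (if ab.1 = ℓ then f ℓ else 0) * extBinom f k ab.2 := by
      rw [← Finset.sum_add_distrib]
      exact Finset.sum_congr rfl fun ab _ => by rw [← add_mul, ← hfa]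
    rw [split, hS1, hS2]
    -- abbreviations
    conv_rhs => rw [Finset.sum_range_succ']
    have hT0 : (if ℓ * 0 ≤ n then
        f ℓ ^ 0 * (k + 1).choose 0 * extBinom g (k + 1 - 0) (n - ℓ * 0) else 0)
        = extBinom g (k + 1) n := by simp
    rw [hT0]
    have hTsplit : ∀ i ∈ Finset.range (k + 1),
        (if ℓ * (i + 1) ≤ n then
          f ℓ ^ (i + 1) * (k + 1).choose (i + 1) * extBinom g (k + 1 - (i + 1)) (n - ℓ * (i + 1))
          else 0)
        = (if ℓ * (i + 1) ≤ n then
            f ℓ ^ (i + 1) * k.choose i * extBinom g (k - i) (n - ℓ * (i + 1)) else 0)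
          + (if ℓ * (i + 1) ≤ n then
            f ℓ ^ (i + 1) * k.choose (i + 1) * extBinom g (k - i) (n - ℓ * (i + 1)) else 0) := by
      intro i _
      by_cases h : ℓ * (i + 1) ≤ n
      · rw [if_pos h, if_pos h, if_pos h, Nat.choose_succ_succ,
          show k + 1 - (i + 1) = k - i by omega]
        ring
      · rw [if_neg h, if_neg h, if_neg h]
    rw [Finset.sum_congr rfl hTsplit, Finset.sum_add_distrib]
    -- claim A : S2 = ∑ U
    have hA : (if ℓ ≤ n then f ℓ * extBinom f k (n - ℓ) else 0)
        = ∑ i ∈ Finset.range (k + 1), if ℓ * (i + 1) ≤ n then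
            f ℓ ^ (i + 1) * k.choose i * extBinom g (k - i) (n - ℓ * (i + 1)) else 0 := by
      by_cases hl : ℓ ≤ n
      · rw [if_pos hl, ih (n - ℓ), Finset.mul_sum]
        refine Finset.sum_congr rfl fun i _ => ?_
        have h1 : ℓ * (i + 1) = ℓ * i + ℓ := by ring
        rw [mul_ite, mul_zero]
        by_cases h2 : ℓ * i ≤ n - ℓ
        · rw [if_pos h2, if_pos (by omega), show n - ℓ - ℓ * i = n - ℓ * (i + 1) by omega]
          ring
        · rw [if_neg h2, if_neg (by omega)]
      · rw [if_neg hl]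
        refine (Finset.sum_eq_zero fun i _ => ?_).symm
        have : ℓ ≤ ℓ * (i + 1) := Nat.le_mul_of_pos_right ℓ (by omega)
        rw [if_neg (by omega)]
    -- claim B : S1 = ∑ V + extBinom g (k+1) n
    have hB : ∑ i ∈ Finset.range (k + 1), (if ℓ * i ≤ n then
          f ℓ ^ i * k.choose i * extBinom g (k + 1 - i) (n - ℓ * i) else 0)
        = (∑ i ∈ Finset.range (k + 1), if ℓ * (i + 1) ≤ n then
            f ℓ ^ (i + 1) * k.choose (i + 1) * extBinom g (k - i) (n - ℓ * (i + 1)) else 0)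
          + extBinom g (k + 1) n := by
      rw [Finset.sum_range_succ']
      congr 1
      · rw [Finset.sum_range_succ]
        have hVk : (if ℓ * (k + 1) ≤ n then
            f ℓ ^ (k + 1) * k.choose (k + 1) * extBinom g (k - k) (n - ℓ * (k + 1)) else 0) = 0 := by
          rw [Nat.choose_succ_self]
          simp
        rw [hVk, add_zero]
        refine Finset.sum_congr rfl fun i hi => ?_
        rw [Finset.mem_range] at hi
        rw [show k + 1 - (i + 1) = k - i by omega]
      · simp
    rw [hA, hB]
    ring
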